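/- For every γ > 0 there exists N such that for all n ≥ N the following holds: if G is a loopless weighted graph on n vertices with edge weights in [0,1] that is a γ-expander, then the mixing time of the lazy random walk on G satisfies t_mix(G) ≤ (64/γ⁴) · log n. -/

import Mathlib

open Finset Filter

noncomputable section

variable {V : Type*} [Fintype V] [DecidableEq V]

/-- The degree of a vertex of a weighted graph: the sum of the incident edge weights. -/
def wdeg (w : V → V → ℝ) (v : V) : ℝ := ∑ u, w v u

/-- The stationary distribution of the random walk on a weighted graph. -/
def statDist (w : V → V → ℝ) (v : V) : ℝ := wdeg w v / ∑ u, wdeg w u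

/-- The one-step transition probability of the random walk. -/
def wstep (w : V → V → ℝ) (x y : V) : ℝ := w x y / wdeg w x

/-- The probability that the random walk follows a given path of `k` steps. -/
def pathWeight (w : V → V → ℝ) {k : ℕ} (x : Fin (k + 1) → V) : ℝ :=
  ∏ i : Fin k, wstep w (x i.castSucc) (x i.succ)

open Classical in
/-- The probability that the first `k` steps of the random walk started at `u` satisfy `P`. -/
def prFrom (w : V → V → ℝ) (u : V) (k : ℕ) (P : (Fin (k + 1) → V) → Prop) : ℝ :=
  ∑ x : Fin (k + 1) → V, if x 0 = u ∧ P x then pathWeight w x else 0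

open Classical in
/-- The probability that the first `k` steps of the stationary random walk satisfy `P`. -/
def prStat (w : V → V → ℝ) (k : ℕ) (P : (Fin (k + 1) → V) → Prop) : ℝ :=
  ∑ x : Fin (k + 1) → V, if P x then statDist w (x 0) * pathWeight w x else 0

/-- `Cap_k(A)`: the probability that a stationary random walk hits `A` within `k` steps. -/
def capa (w : V → V → ℝ) (k : ℕ) (A : Set V) : ℝ :=
  prStat w k fun x => ∃ i, x i ∈ A

/-- A weighted graph: symmetric weights in `[0,1]`, no loops. -/
def IsWeightedGraph (w : V → V → ℝ) : Prop :=
  (∀ x y, w x y = w y x) ∧ (∀ x y, w x y ∈ Set.Icc (0 : ℝ) 1) ∧ (∀ x, w x x = 0)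

/-- Connectedness of a weighted graph: the graph of positive-weight edges is connected. -/
def ConnectedGraph (w : V → V → ℝ) : Prop :=
  (SimpleGraph.fromRel fun x y => 0 < w x y).Connected

/-- `G` is a `γ`-expander: `w(U, Uᶜ) ≥ γ|U|(|V|-|U|)` for all `U ⊆ V`. -/
def IsExpander (w : V → V → ℝ) (γ : ℝ) : Prop :=
  ∀ U : Finset V, γ * U.card * ((Fintype.card V : ℝ) - U.card) ≤ ∑ u ∈ U, ∑ v ∈ Uᶜ, w u v

/-- The transition matrix of the lazy random walk. -/
def lazyStep (w : V → V → ℝ) : Matrix V V ℝ := fun x y =>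
  (if x = y then (1 : ℝ) / 2 else 0) + w x y / (2 * wdeg w x)

/-- The mixing time of the lazy random walk. -/
def mixingTime (w : V → V → ℝ) : ℕ :=
  sInf {t : ℕ | ∀ x y, |(lazyStep w ^ t) x y - statDist w y| ≤ 1 / 4}

/-- `P_π(τ_A < τ_B)`: the probability that the stationary walk hits `A` strictly before `B`. -/
def prHitBefore (w : V → V → ℝ) (A B : Set V) : ℝ :=
  ⨆ k : ℕ, prStat w k fun x => ∃ i, x i ∈ A ∧ ∀ j ≤ i, x j ∉ B

/-- `P_u(τ_A < τ_B)`: the probability that the walk from `u` hits `A` strictly before `B`. -/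
def prHitBeforeFrom (w : V → V → ℝ) (u : V) (A B : Set V) : ℝ :=
  ⨆ k : ℕ, prFrom w u k fun x => ∃ i, x i ∈ A ∧ ∀ j ≤ i, x j ∉ B

open Fin.NatCast in
/-- `P_u(τ_A < τ_B⁺)`: the walk from `u` hits `A` strictly before returning to `B`. -/
def prHitBeforeRet (w : V → V → ℝ) (u : V) (A B : Set V) : ℝ :=
  ⨆ k : ℕ, prFrom w u k fun x => ∃ i, x i ∈ A ∧ ∀ j, 0 < (j : ℕ) → j ≤ i → x j ∉ B

set_option linter.unusedSectionVars false

section ExpanderMixingProof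

lemma wdeg_nonneg (w : V → V → ℝ) (hw : ∀ x y, 0 ≤ w x y) (v : V) : 0 ≤ wdeg w v :=
  Finset.sum_nonneg fun u _ => hw v u

lemma wdeg_le (w : V → V → ℝ) (hw1 : ∀ x y, w x y ≤ 1) (hloop : ∀ x, w x x = 0) (v : V) :
    wdeg w v ≤ (Fintype.card V : ℝ) - 1 := by
  have h1 : wdeg w v = ∑ u ∈ Finset.univ.erase v, w v u := by
    rw [wdeg, ← Finset.sum_erase_add _ _ (Finset.mem_univ v), hloop, add_zero]
  rw [h1]
  calc ∑ u ∈ Finset.univ.erase v, w v u ≤ ∑ u ∈ Finset.univ.erase v, 1 :=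
        Finset.sum_le_sum fun u _ => hw1 v u
    _ = ((Finset.univ.erase v).card : ℝ) := by simp
    _ = (Fintype.card V : ℝ) - 1 := by
        rw [Finset.card_erase_of_mem (Finset.mem_univ v)]
        have : 1 ≤ Fintype.card V := Fintype.card_pos_iff.2 ⟨v⟩
        rw [Finset.card_univ, Nat.cast_sub this, Nat.cast_one]

lemma wdeg_ge {w : V → V → ℝ} {γ : ℝ} (hexp : IsExpander w γ) (hloop : ∀ x, w x x = 0) (v : V) :
    γ * ((Fintype.card V : ℝ) - 1) ≤ wdeg w v := by
  have h := hexp {v}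
  simp only [Finset.card_singleton, Nat.cast_one, mul_one, Finset.sum_singleton] at h
  have h2 : ∑ u ∈ ({v} : Finset V)ᶜ, w v u = wdeg w v := by
    rw [Finset.compl_singleton, wdeg,
      ← Finset.sum_erase_add _ _ (Finset.mem_univ v), hloop, add_zero]
  rw [h2] at h
  linarith [h]

lemma sum_ite_and (c : V → V → ℝ) (A B : Finset V) :
    ∑ x, ∑ y, (if x ∈ A ∧ y ∈ B then c x y else 0) = ∑ x ∈ A, ∑ y ∈ B, c x y := by
  have h : ∀ x, ∑ y, (if x ∈ A ∧ y ∈ B then c x y else 0)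
      = if x ∈ A then ∑ y ∈ B, c x y else 0 := by
    intro x
    by_cases hx : x ∈ A
    · simp only [hx, true_and, if_true]
      rw [Finset.sum_ite_mem, Finset.univ_inter]
    · simp [hx]
  rw [Finset.sum_congr rfl fun x _ => h x, Finset.sum_ite_mem, Finset.univ_inter]

lemma sum_mul_absdiff_ind (c : V → V → ℝ) (U : Finset V) :
    ∑ x, ∑ y, c x y * |(if x ∈ U then (1:ℝ) else 0) - (if y ∈ U then (1:ℝ) else 0)|
      = (∑ x ∈ U, ∑ y ∈ Uᶜ, c x y) + ∑ x ∈ Uᶜ, ∑ y ∈ (Uᶜ)ᶜ, c x y := by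
  have key : ∀ x y, c x y * |(if x ∈ U then (1:ℝ) else 0) - (if y ∈ U then (1:ℝ) else 0)|
      = (if x ∈ U ∧ y ∈ Uᶜ then c x y else 0) + (if x ∈ Uᶜ ∧ y ∈ (Uᶜ)ᶜ then c x y else 0) := by
    intro x y
    by_cases hx : x ∈ U <;> by_cases hy : y ∈ U <;>
      simp [hx, hy, Finset.mem_compl, abs_of_nonneg, abs_of_nonpos]
  calc ∑ x, ∑ y, c x y * |(if x ∈ U then (1:ℝ) else 0) - (if y ∈ U then (1:ℝ) else 0)|
      = ∑ x, ∑ y, ((if x ∈ U ∧ y ∈ Uᶜ then c x y else 0)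
          + (if x ∈ Uᶜ ∧ y ∈ (Uᶜ)ᶜ then c x y else 0)) := by
        exact Finset.sum_congr rfl fun x _ => Finset.sum_congr rfl fun y _ => key x y
    _ = _ := by
        rw [← sum_ite_and c U Uᶜ, ← sum_ite_and c Uᶜ (Uᶜ)ᶜ, ← Finset.sum_add_distrib]
        exact Finset.sum_congr rfl fun x _ => Finset.sum_add_distrib

lemma sum_prod_eq (h : V → V → ℝ) : ∑ p : V × V, h p.1 p.2 = ∑ x, ∑ y, h x y := by
  rw [← Finset.univ_product_univ, Finset.sum_product']

open MeasureTheory in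
lemma coarea {w : V → V → ℝ} {γ : ℝ} (hexp : IsExpander w γ) (hγ : 0 ≤ γ) (g : V → ℝ) :
    γ * ∑ x, ∑ y, |g x - g y| ≤ ∑ x, ∑ y, w x y * |g x - g y| := by
  classical
  set F : V → V → ℝ → ℝ := fun x y =>
    (Set.Ioc (min (g x) (g y)) (max (g x) (g y))).indicator (fun _ => (1:ℝ)) with hF
  have hFint : ∀ x y, Integrable (F x y) := by
    intro x y
    rw [hF]
    refine (integrable_indicator_iff measurableSet_Ioc).2 ?_
    exact integrableOn_const measure_Ioc_lt_top.ne
  have hFval : ∀ x y, ∫ t, F x y t = |g x - g y| := by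
    intro x y
    rw [hF]
    simp only []
    rw [integral_indicator_const (1:ℝ) measurableSet_Ioc, measureReal_def, Real.volume_Ioc,
      ENNReal.toReal_ofReal (by simp [min_le_max] : (0:ℝ) ≤ max (g x) (g y) - min (g x) (g y)),
      smul_eq_mul, mul_one, max_sub_min_eq_abs, abs_sub_comm]
  have hFchi : ∀ (t : ℝ) x y, F x y t
      = |(if x ∈ Finset.univ.filter (fun v => t ≤ g v) then (1:ℝ) else 0)
        - (if y ∈ Finset.univ.filter (fun v => t ≤ g v) then (1:ℝ) else 0)| := by
    intro t x y
    simp only [Finset.mem_filter, Finset.mem_univ, true_and, hF, Set.indicator_apply,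
      Set.mem_Ioc]
    rcases le_or_gt t (g x) with hx | hx <;> rcases le_or_gt t (g y) with hy | hy
    · rw [if_neg (fun h => absurd h.1 (not_lt.2 (le_min hx hy))), if_pos hx, if_pos hy]
      norm_num
    · rw [if_pos ⟨lt_of_le_of_lt (min_le_right _ _) hy, le_trans hx (le_max_left _ _)⟩,
        if_pos hx, if_neg (not_le.2 hy)]
      norm_num
    · rw [if_pos ⟨lt_of_le_of_lt (min_le_left _ _) hx, le_trans hy (le_max_right _ _)⟩,
        if_neg (not_le.2 hx), if_pos hy]
      norm_num
    · rw [if_neg (fun h => absurd h.2 (not_le.2 (max_lt hx hy))), if_neg (not_le.2 hx),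
        if_neg (not_le.2 hy)]
      norm_num
  have hpt : ∀ t : ℝ, γ * ∑ x, ∑ y, F x y t ≤ ∑ x, ∑ y, w x y * F x y t := by
    intro t
    set U : Finset V := Finset.univ.filter (fun v => t ≤ g v) with hU
    have hL : ∑ x, ∑ y, F x y t = (U.card : ℝ) * Uᶜ.card + Uᶜ.card * (Uᶜ)ᶜ.card := by
      have h0 : ∀ x y, F x y t = (fun _ _ : V => (1:ℝ)) x y * |(if x ∈ U then (1:ℝ) else 0)
          - (if y ∈ U then (1:ℝ) else 0)| := by
        intro x y; rw [one_mul]; exact hFchi t x y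
      rw [Finset.sum_congr rfl fun x _ => Finset.sum_congr rfl fun y _ => h0 x y,
        sum_mul_absdiff_ind]
      simp
    have hR : ∑ x, ∑ y, w x y * F x y t
        = (∑ x ∈ U, ∑ y ∈ Uᶜ, w x y) + ∑ x ∈ Uᶜ, ∑ y ∈ (Uᶜ)ᶜ, w x y := by
      rw [← sum_mul_absdiff_ind w U]
      exact Finset.sum_congr rfl fun x _ => Finset.sum_congr rfl fun y _ => by
        rw [hFchi t x y]
    have hcard : (U.card : ℝ) + (Uᶜ.card : ℝ) = Fintype.card V := by
      rw [← Nat.cast_add, Finset.card_add_card_compl]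
    have h1 := hexp U
    have h2 := hexp Uᶜ
    have e1 : ((Fintype.card V : ℝ) - U.card) = Uᶜ.card := by linarith
    have e2 : ((Fintype.card V : ℝ) - Uᶜ.card) = U.card := by linarith
    rw [e1] at h1
    rw [e2] at h2
    rw [compl_compl] at hL hR h2
    rw [hL, hR]
    nlinarith [h1, h2]
  have hptP : ∀ t : ℝ, γ * ∑ p : V × V, F p.1 p.2 t ≤ ∑ p : V × V, w p.1 p.2 * F p.1 p.2 t := by
    intro t
    rw [sum_prod_eq (fun x y => F x y t), sum_prod_eq (fun x y => w x y * F x y t)]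
    exact hpt t
  calc γ * ∑ x, ∑ y, |g x - g y|
      = γ * ∑ p : V × V, ∫ t, F p.1 p.2 t := by
        rw [← sum_prod_eq (fun x y => |g x - g y|)]
        congr 1
        exact Finset.sum_congr rfl fun p _ => (hFval p.1 p.2).symm
    _ = γ * ∫ t, ∑ p : V × V, F p.1 p.2 t := by
        rw [integral_finset_sum _ fun p _ => hFint p.1 p.2]
    _ ≤ ∫ t, ∑ p : V × V, w p.1 p.2 * F p.1 p.2 t := by
        rw [← integral_const_mul]
        refine integral_mono ?_ ?_ hptP
        · exact (integrable_finset_sum _ fun p _ => hFint p.1 p.2).const_mul γ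
        · exact integrable_finset_sum _ fun p _ => (hFint p.1 p.2).const_mul _
    _ = ∑ p : V × V, ∫ t, w p.1 p.2 * F p.1 p.2 t := by
        rw [integral_finset_sum _ fun (p : V × V) _ => (hFint p.1 p.2).const_mul (w p.1 p.2)]
    _ = ∑ x, ∑ y, w x y * |g x - g y| := by
        rw [← sum_prod_eq (fun x y => w x y * |g x - g y|)]
        exact Finset.sum_congr rfl fun p _ => by rw [integral_const_mul, hFval]

private lemma sgnsq_main (u v : ℝ) (huv : v ≤ u) : (u - v)^2 ≤ 2*(u*|u| - v*|v|) := by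
  rcases le_total 0 u with hu | hu
  · rcases le_total 0 v with hv | hv
    · rw [abs_of_nonneg hu, abs_of_nonneg hv]; nlinarith
    · rw [abs_of_nonneg hu, abs_of_nonpos hv]; nlinarith [sq_nonneg (u+v)]
  · rcases le_total 0 v with hv | hv
    · rw [abs_of_nonpos hu, abs_of_nonneg hv]; nlinarith
    · rw [abs_of_nonpos hu, abs_of_nonpos hv]; nlinarith

private lemma sgnsq_main2 (u v : ℝ) (huv : v ≤ u) :
    0 ≤ u*|u| - v*|v| ∧ u*|u| - v*|v| ≤ (u - v)*(|u|+|v|) := by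
  rcases le_total 0 u with hu | hu
  · rcases le_total 0 v with hv | hv
    · rw [abs_of_nonneg hu, abs_of_nonneg hv]; constructor <;> nlinarith
    · rw [abs_of_nonneg hu, abs_of_nonpos hv]; constructor <;> nlinarith
  · rcases le_total 0 v with hv | hv
    · rw [abs_of_nonpos hu, abs_of_nonneg hv]; constructor <;> nlinarith
    · rw [abs_of_nonpos hu, abs_of_nonpos hv]; constructor <;> nlinarith

lemma sgnsq_ineq1 (a b : ℝ) : (a - b)^2 ≤ 2 * abs (a * |a| - b * |b|) := by
  rcases le_total b a with h | h
  · have h1 := sgnsq_main a b h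
    have h2 := le_abs_self (a*|a| - b*|b|)
    linarith
  · have h1 := sgnsq_main b a h
    have h2 := neg_le_abs (a*|a| - b*|b|)
    have e : (a-b)^2 = (b-a)^2 := by ring
    linarith

lemma sgnsq_ineq2 (a b : ℝ) : abs (a * |a| - b * |b|) ≤ |a - b| * (|a| + |b|) := by
  rcases le_total b a with h | h
  · obtain ⟨h0, h1⟩ := sgnsq_main2 a b h
    rw [abs_of_nonneg h0, abs_of_nonneg (sub_nonneg.2 h)]
    exact h1
  · obtain ⟨h0, h1⟩ := sgnsq_main2 b a h
    have e1 : abs (a * |a| - b * |b|) = b*|b| - a*|a| := by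
      rw [abs_sub_comm]; exact abs_of_nonneg h0
    have e2 : |a - b| = b - a := by rw [abs_sub_comm]; exact abs_of_nonneg (sub_nonneg.2 h)
    rw [e1, e2]
    linarith

lemma double_sum_sq (f : V → ℝ) (hmean : ∑ v, f v = 0) :
    ∑ x, ∑ y, (f x - f y)^2 = 2 * (Fintype.card V : ℝ) * ∑ v, f v^2 := by
  have inner : ∀ x, ∑ y, (f x - f y)^2 = (Fintype.card V : ℝ) * f x^2 + ∑ v, f v^2 := by
    intro x
    have e : ∀ y : V, (f x - f y)^2 = f x^2 + f y^2 - 2*(f x * f y) := fun y => by ring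
    rw [Finset.sum_congr rfl fun y _ => e y]
    rw [Finset.sum_sub_distrib, Finset.sum_add_distrib, ← Finset.mul_sum, ← Finset.mul_sum,
      hmean, Finset.sum_const, Finset.card_univ]
    simp only [nsmul_eq_mul, mul_zero, sub_zero]
    try ring
  rw [Finset.sum_congr rfl fun x _ => inner x, Finset.sum_add_distrib, ← Finset.mul_sum,
    Finset.sum_const, Finset.card_univ, nsmul_eq_mul]
  ring

lemma dirichlet_comparison_aux {w : V → V → ℝ} {γ : ℝ} (hw0 : ∀ x y, 0 ≤ w x y)
    (hw1 : ∀ x y, w x y ≤ 1) (hexp : IsExpander w γ) (hγ : 0 ≤ γ) (f : V → ℝ)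
    (hmean : ∑ v, f v = 0) :
    γ^2 * ∑ x, ∑ y, (f x - f y)^2 ≤ 8 * ∑ x, ∑ y, w x y * (f x - f y)^2 := by
  classical
  set n : ℝ := (Fintype.card V : ℝ) with hn
  set S : ℝ := ∑ v, f v^2 with hS
  have hS0 : 0 ≤ S := Finset.sum_nonneg fun v _ => sq_nonneg _
  have hQC := double_sum_sq f hmean
  set Qw : ℝ := ∑ x, ∑ y, w x y * (f x - f y)^2 with hQw
  have hQw0 : 0 ≤ Qw := Finset.sum_nonneg fun x _ => Finset.sum_nonneg fun y _ =>
    mul_nonneg (hw0 x y) (sq_nonneg _)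
  set g : V → ℝ := fun v => f v * |f v| with hg
  -- step 1 : γ * 2nS ≤ 2 * ∑∑ w |g x - g y|
  have step1 : γ * (2 * n * S) ≤ 2 * ∑ x, ∑ y, w x y * |g x - g y| := by
    have h1 : ∑ x, ∑ y, (f x - f y)^2 ≤ ∑ x, ∑ y, 2 * |g x - g y| :=
      Finset.sum_le_sum fun x _ => Finset.sum_le_sum fun y _ => sgnsq_ineq1 (f x) (f y)
    have h2 := coarea hexp hγ g
    have h3 : ∑ x, ∑ y, (2:ℝ) * |g x - g y| = 2 * ∑ x, ∑ y, |g x - g y| := by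
      rw [Finset.mul_sum]
      exact Finset.sum_congr rfl fun x _ => by rw [Finset.mul_sum]
    rw [← hQC]
    calc γ * ∑ x, ∑ y, (f x - f y)^2 ≤ γ * (2 * ∑ x, ∑ y, |g x - g y|) := by
          rw [← h3]; exact mul_le_mul_of_nonneg_left (h3 ▸ h1) hγ
      _ = 2 * (γ * ∑ x, ∑ y, |g x - g y|) := by ring
      _ ≤ 2 * ∑ x, ∑ y, w x y * |g x - g y| := by linarith
  -- step 2 : ∑∑ w|g-g| ≤ B where B uses Cauchy–Schwarz
  have step2 : ∑ x, ∑ y, w x y * |g x - g y|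
      ≤ ∑ x, ∑ y, w x y * (|f x - f y| * (|f x| + |f y|)) :=
    Finset.sum_le_sum fun x _ => Finset.sum_le_sum fun y _ =>
      mul_le_mul_of_nonneg_left (sgnsq_ineq2 (f x) (f y)) (hw0 x y)
  set B : ℝ := ∑ x, ∑ y, w x y * (|f x - f y| * (|f x| + |f y|)) with hB
  -- Cauchy-Schwarz: B^2 ≤ Qw * ∑∑ w (|fx|+|fy|)^2
  have stepCS : B^2 ≤ Qw * ∑ x, ∑ y, w x y * (|f x| + |f y|)^2 := by
    have hcs := Finset.sum_mul_sq_le_sq_mul_sq Finset.univ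
      (fun p : V × V => Real.sqrt (w p.1 p.2) * |f p.1 - f p.2|)
      (fun p : V × V => Real.sqrt (w p.1 p.2) * (|f p.1| + |f p.2|))
    have e1 : ∑ p : V × V, (Real.sqrt (w p.1 p.2) * |f p.1 - f p.2|)
        * (Real.sqrt (w p.1 p.2) * (|f p.1| + |f p.2|)) = B := by
      rw [hB, ← sum_prod_eq (fun x y => w x y * (|f x - f y| * (|f x| + |f y|)))]
      refine Finset.sum_congr rfl fun p _ => ?_
      rw [show (Real.sqrt (w p.1 p.2) * |f p.1 - f p.2|)
          * (Real.sqrt (w p.1 p.2) * (|f p.1| + |f p.2|))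
          = (Real.sqrt (w p.1 p.2) * Real.sqrt (w p.1 p.2)) * (|f p.1 - f p.2| * (|f p.1| + |f p.2|))
          from by ring, Real.mul_self_sqrt (hw0 _ _)]
    have e2 : ∑ p : V × V, (Real.sqrt (w p.1 p.2) * |f p.1 - f p.2|)^2 = Qw := by
      rw [hQw, ← sum_prod_eq (fun x y => w x y * (f x - f y)^2)]
      refine Finset.sum_congr rfl fun p _ => ?_
      rw [mul_pow, Real.sq_sqrt (hw0 _ _), sq_abs]
    have e3 : ∑ p : V × V, (Real.sqrt (w p.1 p.2) * (|f p.1| + |f p.2|))^2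
        = ∑ x, ∑ y, w x y * (|f x| + |f y|)^2 := by
      rw [← sum_prod_eq (fun x y => w x y * (|f x| + |f y|)^2)]
      refine Finset.sum_congr rfl fun p _ => ?_
      rw [mul_pow, Real.sq_sqrt (hw0 _ _)]
    rw [e1, e2, e3] at hcs
    exact hcs
  -- ∑∑ w (|fx|+|fy|)^2 ≤ 4 n S
  have step4 : ∑ x, ∑ y, w x y * (|f x| + |f y|)^2 ≤ 4 * n * S := by
    have h1 : ∀ x y : V, w x y * (|f x| + |f y|)^2 ≤ 2*f x^2 + 2*f y^2 := by
      intro x y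
      have h2 : (|f x| + |f y|)^2 ≤ 2*f x^2 + 2*f y^2 := by
        have := sq_nonneg (|f x| - |f y|)
        have e1 : |f x|^2 = f x^2 := sq_abs _
        have e2 : |f y|^2 = f y^2 := sq_abs _
        nlinarith
      calc w x y * (|f x| + |f y|)^2 ≤ 1 * (|f x| + |f y|)^2 :=
            mul_le_mul_of_nonneg_right (hw1 x y) (sq_nonneg _)
        _ = (|f x| + |f y|)^2 := one_mul _
        _ ≤ 2*f x^2 + 2*f y^2 := h2
    calc ∑ x, ∑ y, w x y * (|f x| + |f y|)^2 ≤ ∑ x, ∑ y, (2*f x^2 + 2*f y^2) :=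
          Finset.sum_le_sum fun x _ => Finset.sum_le_sum fun y _ => h1 x y
      _ = 4 * n * S := by
          have inner : ∀ x : V, ∑ y, (2*f x^2 + 2*f y^2) = n * (2*f x^2) + 2*S := by
            intro x
            rw [Finset.sum_add_distrib, Finset.sum_const, Finset.card_univ, nsmul_eq_mul,
              ← Finset.mul_sum]
          rw [Finset.sum_congr rfl fun x _ => inner x, Finset.sum_add_distrib,
            ← Finset.mul_sum, Finset.sum_const, Finset.card_univ, nsmul_eq_mul]
          have : ∑ x, 2*f x^2 = 2*S := by rw [← Finset.mul_sum]
          rw [this]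
          ring
  -- combine
  rw [hQC]
  have hB0 : 0 ≤ B := by
    refine Finset.sum_nonneg fun x _ => Finset.sum_nonneg fun y _ => ?_
    exact mul_nonneg (hw0 x y) (mul_nonneg (abs_nonneg _) (by positivity))
  have key : (γ * (2*n*S))^2 ≤ 4 * (Qw * (4*n*S)) := by
    have h5 : γ * (2*n*S) ≤ 2*B := by linarith
    have h6 : (γ*(2*n*S))^2 ≤ (2*B)^2 := by
      have h7 : 0 ≤ γ * (2*n*S) := by
        have hn0 : 0 ≤ n := by positivity
        positivity
      nlinarith
    have h8 : B^2 ≤ Qw * (4*n*S) := le_trans stepCS (by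
      have := mul_le_mul_of_nonneg_left step4 hQw0
      linarith)
    nlinarith
  rcases eq_or_lt_of_le hS0 with hS0' | hSpos
  · -- S = 0
    have : 2*n*S = 0 := by rw [← hS0']; ring
    rw [this]
    simp only [mul_zero]
    linarith
  · have hnpos : 0 < n := by
      by_contra hcon
      push_neg at hcon
      have : (Fintype.card V : ℝ) = 0 := le_antisymm hcon (by positivity)
      have hcard : Fintype.card V = 0 := by exact_mod_cast this
      have : S = 0 := by
        rw [hS]
        have : (Finset.univ : Finset V) = ∅ := Finset.card_eq_zero.1 (by simpa using hcard)
        simp [this]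
      linarith
    nlinarith [mul_pos hnpos hSpos, key]

lemma dirichlet_comparison {w : V → V → ℝ} {γ : ℝ} (hw0 : ∀ x y, 0 ≤ w x y)
    (hw1 : ∀ x y, w x y ≤ 1) (hexp : IsExpander w γ) (hγ : 0 ≤ γ) (f : V → ℝ) :
    γ^2 * ∑ x, ∑ y, (f x - f y)^2 ≤ 8 * ∑ x, ∑ y, w x y * (f x - f y)^2 := by
  by_cases hV : Nonempty V
  · set c : ℝ := (∑ v, f v) / Fintype.card V with hc
    have hn0 : (Fintype.card V : ℝ) ≠ 0 := by
      simp [Fintype.card_ne_zero]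
    have hmean : ∑ v, (f v - c) = 0 := by
      rw [Finset.sum_sub_distrib, Finset.sum_const, Finset.card_univ, nsmul_eq_mul, hc]
      field_simp
      ring
    have h := dirichlet_comparison_aux hw0 hw1 hexp hγ (fun v => f v - c) hmean
    have e1 : ∀ x y : V, (f x - c - (f y - c)) = f x - f y := fun x y => by ring
    simp only [e1] at h
    exact h
  · have : (Finset.univ : Finset V) = ∅ := by
      simp [Finset.univ_eq_empty_iff.2 (not_nonempty_iff.1 hV)]
    simp [this]

lemma lazy_nonneg {w : V → V → ℝ} (hw0 : ∀ x y, 0 ≤ w x y) (x y : V) :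
    0 ≤ lazyStep w x y := by
  unfold lazyStep
  apply add_nonneg
  · split <;> norm_num
  · apply div_nonneg (hw0 x y)
    have := wdeg_nonneg w hw0 x
    linarith

lemma lazy_rowsum {w : V → V → ℝ} (hd : ∀ v, 0 < wdeg w v) (x : V) :
    ∑ y, lazyStep w x y = 1 := by
  unfold lazyStep
  rw [Finset.sum_add_distrib, Finset.sum_ite_eq, ← Finset.sum_div]
  simp only [Finset.mem_univ, if_true]
  rw [show ∑ y, w x y = wdeg w x from rfl]
  have hx := (hd x).ne'
  field_simp
  ring

lemma lazy_diag {w : V → V → ℝ} (hw0 : ∀ x y, 0 ≤ w x y) (x : V) :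
    1/2 ≤ lazyStep w x x := by
  unfold lazyStep
  rw [if_pos rfl]
  have h := wdeg_nonneg w hw0 x
  have : 0 ≤ w x x / (2 * wdeg w x) := div_nonneg (hw0 x x) (by linarith)
  linarith

lemma lazy_rev {w : V → V → ℝ} (hsymm : ∀ x y, w x y = w y x) (hd : ∀ v, 0 < wdeg w v)
    (x y : V) : statDist w x * lazyStep w x y = statDist w y * lazyStep w y x := by
  unfold statDist lazyStep
  rcases eq_or_ne x y with rfl | hxy
  · rfl
  · rw [if_neg hxy, if_neg (Ne.symm hxy), zero_add, zero_add, hsymm x y]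
    have hx := (hd x).ne'
    have hy := (hd y).ne'
    rcases eq_or_ne (∑ u, wdeg w u) 0 with hW | hW
    · rw [hW]
      simp
    · field_simp

lemma pow_rowsum {w : V → V → ℝ} (hd : ∀ v, 0 < wdeg w v) (t : ℕ) (x : V) :
    ∑ y, (lazyStep w ^ t) x y = 1 := by
  induction t generalizing x with
  | zero => simp [Matrix.one_apply]
  | succ t ih =>
      rw [pow_succ]
      simp only [Matrix.mul_apply]
      rw [Finset.sum_comm]
      calc ∑ z, ∑ y, (lazyStep w ^ t) x z * lazyStep w z y
          = ∑ z, (lazyStep w ^ t) x z * ∑ y, lazyStep w z y := by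
            exact Finset.sum_congr rfl fun z _ => by rw [Finset.mul_sum]
        _ = ∑ z, (lazyStep w ^ t) x z := by
            exact Finset.sum_congr rfl fun z _ => by rw [lazy_rowsum hd z, mul_one]
        _ = 1 := ih x

lemma pow_nonneg' {w : V → V → ℝ} (hw0 : ∀ x y, 0 ≤ w x y) (t : ℕ) (x y : V) :
    0 ≤ (lazyStep w ^ t) x y := by
  induction t generalizing x y with
  | zero =>
      rw [pow_zero, Matrix.one_apply]
      split <;> norm_num
  | succ t ih =>
      rw [pow_succ, Matrix.mul_apply]
      exact Finset.sum_nonneg fun z _ => mul_nonneg (ih x z) (lazy_nonneg hw0 z y)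

lemma pow_rev {w : V → V → ℝ} (hsymm : ∀ x y, w x y = w y x) (hd : ∀ v, 0 < wdeg w v)
    (t : ℕ) (x y : V) :
    statDist w x * (lazyStep w ^ t) x y = statDist w y * (lazyStep w ^ t) y x := by
  induction t generalizing x y with
  | zero =>
      simp only [pow_zero, Matrix.one_apply]
      rcases eq_or_ne x y with rfl | hxy
      · rfl
      · rw [if_neg hxy, if_neg (Ne.symm hxy), mul_zero, mul_zero]
  | succ t ih =>
      have hcomm : lazyStep w ^ t * lazyStep w = lazyStep w * lazyStep w ^ t := by
        rw [← pow_succ, pow_succ']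
      rw [pow_succ]
      conv_rhs => rw [hcomm]
      simp only [Matrix.mul_apply]
      calc statDist w x * ∑ z, (lazyStep w ^ t) x z * lazyStep w z y
          = ∑ z, (statDist w x * (lazyStep w ^ t) x z) * lazyStep w z y := by
            rw [Finset.mul_sum]
            exact Finset.sum_congr rfl fun z _ => by ring
        _ = ∑ z, (statDist w z * (lazyStep w ^ t) z x) * lazyStep w z y := by
            exact Finset.sum_congr rfl fun z _ => by rw [ih x z]
        _ = ∑ z, (lazyStep w ^ t) z x * (statDist w z * lazyStep w z y) := by
            exact Finset.sum_congr rfl fun z _ => by ring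
        _ = ∑ z, (lazyStep w ^ t) z x * (statDist w y * lazyStep w y z) := by
            exact Finset.sum_congr rfl fun z _ => by rw [lazy_rev hsymm hd z y]
        _ = statDist w y * ∑ z, lazyStep w y z * (lazyStep w ^ t) z x := by
            rw [Finset.mul_sum]
            exact Finset.sum_congr rfl fun z _ => by ring

lemma lazy_col {w : V → V → ℝ} (hsymm : ∀ x y, w x y = w y x) (hd : ∀ v, 0 < wdeg w v)
    (y : V) : ∑ x, statDist w x * lazyStep w x y = statDist w y := by
  calc ∑ x, statDist w x * lazyStep w x y = ∑ x, statDist w y * lazyStep w y x :=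
        Finset.sum_congr rfl fun x _ => lazy_rev hsymm hd x y
    _ = statDist w y * ∑ x, lazyStep w y x := by rw [Finset.mul_sum]
    _ = statDist w y := by rw [lazy_rowsum hd, mul_one]

lemma statDist_nonneg {w : V → V → ℝ} (hw0 : ∀ x y, 0 ≤ w x y) (v : V) :
    0 ≤ statDist w v :=
  div_nonneg (wdeg_nonneg w hw0 v) (Finset.sum_nonneg fun u _ => wdeg_nonneg w hw0 u)

lemma statDist_sum {w : V → V → ℝ} (hW : (∑ u, wdeg w u) ≠ 0) :
    ∑ v, statDist w v = 1 := by
  unfold statDist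
  rw [← Finset.sum_div, div_self hW]

lemma quad_identity (ρ : V → ℝ) (K : V → V → ℝ) (u : V → ℝ)
    (hrow : ∀ y, ∑ z, K y z = 1) (hcol : ∀ z, ∑ y, ρ y * K y z = ρ z) :
    ∑ y, ∑ z, (ρ y * K y z) * (u y - u z)^2
      = 2 * (∑ x, ρ x * u x^2) - 2 * ∑ y, ∑ z, (ρ y * K y z) * (u y * u z) := by
  have hA : ∑ y, ∑ z, (ρ y * K y z) * u y^2 = ∑ x, ρ x * u x^2 := by
    refine Finset.sum_congr rfl fun y _ => ?_
    calc ∑ z, (ρ y * K y z) * u y^2 = ρ y * u y^2 * ∑ z, K y z := by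
          rw [Finset.mul_sum]
          exact Finset.sum_congr rfl fun z _ => by ring
      _ = ρ y * u y^2 := by rw [hrow, mul_one]
  have hB : ∑ y, ∑ z, (ρ y * K y z) * u z^2 = ∑ x, ρ x * u x^2 := by
    rw [Finset.sum_comm]
    refine Finset.sum_congr rfl fun z _ => ?_
    calc ∑ y, (ρ y * K y z) * u z^2 = (∑ y, ρ y * K y z) * u z^2 := by rw [Finset.sum_mul]
      _ = ρ z * u z^2 := by rw [hcol]
  have i1 : ∀ y, ∑ z, ((ρ y * K y z) * u y^2 + (ρ y * K y z) * u z^2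
      - 2*((ρ y * K y z) * (u y * u z)))
      = (∑ z, (ρ y * K y z) * u y^2) + (∑ z, (ρ y * K y z) * u z^2)
        - 2*∑ z, (ρ y * K y z) * (u y * u z) := by
    intro y
    rw [Finset.sum_sub_distrib, Finset.sum_add_distrib, ← Finset.mul_sum]
  calc ∑ y, ∑ z, (ρ y * K y z) * (u y - u z)^2
      = ∑ y, ∑ z, ((ρ y * K y z) * u y^2 + (ρ y * K y z) * u z^2
          - 2*((ρ y * K y z) * (u y * u z))) :=
        Finset.sum_congr rfl fun y _ => Finset.sum_congr rfl fun z _ => by ring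
    _ = (∑ y, ∑ z, (ρ y * K y z) * u y^2) + (∑ y, ∑ z, (ρ y * K y z) * u z^2)
        - 2 * ∑ y, ∑ z, (ρ y * K y z) * (u y * u z) := by
        rw [Finset.sum_congr rfl fun y _ => i1 y, Finset.sum_sub_distrib,
          Finset.sum_add_distrib, ← Finset.mul_sum]
    _ = _ := by rw [hA, hB]; ring

lemma contraction {w : V → V → ℝ} {γ : ℝ} (hsymm : ∀ x y, w x y = w y x)
    (hw0 : ∀ x y, 0 ≤ w x y) (hw1 : ∀ x y, w x y ≤ 1) (hloop : ∀ x, w x x = 0)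
    (hexp : IsExpander w γ) (hγ : 0 < γ) (hn2 : 2 ≤ Fintype.card V) (u : V → ℝ)
    (hu : ∑ x, statDist w x * u x = 0) :
    ∑ x, statDist w x * (∑ y, lazyStep w x y * u y)^2
      ≤ (1 - γ^3/64) * ∑ x, statDist w x * u x^2 := by
  classical
  set n : ℝ := (Fintype.card V : ℝ) with hn
  have hn2' : (2:ℝ) ≤ n := by rw [hn]; exact_mod_cast hn2
  have hn0 : (0:ℝ) < n := by linarith
  have hNe : Nonempty V := Fintype.card_pos_iff.1 (by omega)
  have hd : ∀ v, 0 < wdeg w v := fun v =>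
    lt_of_lt_of_le (mul_pos hγ (by linarith : (0:ℝ) < n - 1)) (wdeg_ge hexp hloop v)
  set W : ℝ := ∑ v, wdeg w v with hW
  have hW0 : 0 < W := Finset.sum_pos (fun v _ => hd v) Finset.univ_nonempty
  have hWn : γ * n^2 ≤ 2*W := by
    have h1 : ∑ v : V, γ*(n-1) ≤ ∑ v, wdeg w v :=
      Finset.sum_le_sum fun v _ => wdeg_ge hexp hloop v
    rw [Finset.sum_const, Finset.card_univ, nsmul_eq_mul] at h1
    nlinarith [hγ.le]
  set π : V → ℝ := statDist w with hπ
  have hπ0 : ∀ v, 0 ≤ π v := statDist_nonneg hw0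
  have hπle : ∀ v, W * π v ≤ n := by
    intro v
    have e : W * π v = wdeg w v := by
      rw [hπ, statDist, ← hW]
      field_simp
    rw [e]
    have := wdeg_le w hw1 hloop v
    linarith
  set P := lazyStep w with hP
  set M : V → V → ℝ := fun y z => ∑ a, P y a * P a z with hM
  have hProw := lazy_rowsum hd
  have hPcol := lazy_col hsymm hd
  have hP0 : ∀ x y, 0 ≤ P x y := lazy_nonneg hw0
  have hMrow : ∀ y, ∑ z, M y z = 1 := by
    intro y
    simp only [hM]
    rw [Finset.sum_comm]
    calc ∑ a, ∑ z, P y a * P a z = ∑ a, P y a * ∑ z, P a z :=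
          Finset.sum_congr rfl fun a _ => (Finset.mul_sum _ _ _).symm
      _ = ∑ a, P y a := Finset.sum_congr rfl fun a _ => by rw [hProw a, mul_one]
      _ = 1 := hProw y
  have hMcol : ∀ z, ∑ y, π y * M y z = π z := by
    intro z
    calc ∑ y, π y * M y z = ∑ y, ∑ a, (π y * P y a) * P a z := by
          refine Finset.sum_congr rfl fun y _ => ?_
          simp only [hM]
          rw [Finset.mul_sum]
          exact Finset.sum_congr rfl fun a _ => by ring
      _ = ∑ a, (∑ y, π y * P y a) * P a z := by
          rw [Finset.sum_comm]
          exact Finset.sum_congr rfl fun a _ => by rw [Finset.sum_mul]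
      _ = ∑ a, π a * P a z := Finset.sum_congr rfl fun a _ => by rw [hPcol a]
      _ = π z := hPcol z
  have hM0 : ∀ y z, 0 ≤ M y z := fun y z =>
    Finset.sum_nonneg fun a _ => mul_nonneg (hP0 y a) (hP0 a z)
  have hMge : ∀ y z, (1/2) * P y z ≤ M y z := by
    intro y z
    have h1 : P y y * P y z ≤ M y z := by
      simp only [hM]
      exact Finset.single_le_sum (f := fun a => P y a * P a z)
        (fun a _ => mul_nonneg (hP0 y a) (hP0 a z)) (Finset.mem_univ y)
    have h2 := lazy_diag hw0 y
    nlinarith [hP0 y z]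
  set Su : ℝ := ∑ x, π x * u x^2 with hSu
  have hSu0 : 0 ≤ Su := Finset.sum_nonneg fun x _ => mul_nonneg (hπ0 x) (sq_nonneg _)
  set C : ℝ := ∑ y, ∑ z, (π y * M y z) * (u y * u z) with hC
  have hLHS : ∑ x, π x * (∑ y, P x y * u y)^2 = C := by
    have e1 : ∀ x, π x * (∑ y, P x y * u y)^2
        = ∑ y, ∑ z, (π x * (P x y * P x z)) * (u y * u z) := by
      intro x
      rw [sq, Finset.sum_mul_sum, Finset.mul_sum]
      refine Finset.sum_congr rfl fun y _ => ?_
      rw [Finset.mul_sum]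
      exact Finset.sum_congr rfl fun z _ => by ring
    rw [Finset.sum_congr rfl fun x _ => e1 x, Finset.sum_comm]
    refine Finset.sum_congr rfl fun y _ => ?_
    rw [Finset.sum_comm]
    refine Finset.sum_congr rfl fun z _ => ?_
    rw [← Finset.sum_mul]
    congr 1
    calc ∑ x, π x * (P x y * P x z) = ∑ x, (π y * P y x) * P x z := by
          refine Finset.sum_congr rfl fun x _ => ?_
          calc π x * (P x y * P x z) = (π x * P x y) * P x z := by ring
            _ = (π y * P y x) * P x z := by rw [lazy_rev hsymm hd x y]
      _ = π y * M y z := by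
          simp only [hM]
          rw [Finset.mul_sum]
          exact Finset.sum_congr rfl fun x _ => by ring
  set D : ℝ := ∑ y, ∑ z, (π y * M y z) * (u y - u z)^2 with hD
  have hD2 : D = 2*Su - 2*C := quad_identity π M u hMrow hMcol
  have hD0 : 0 ≤ D := Finset.sum_nonneg fun y _ => Finset.sum_nonneg fun z _ =>
    mul_nonneg (mul_nonneg (hπ0 y) (hM0 y z)) (sq_nonneg _)
  set QC : ℝ := ∑ y, ∑ z, (u y - u z)^2 with hQC
  set Qw : ℝ := ∑ y, ∑ z, w y z * (u y - u z)^2 with hQw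
  have hcomp : γ^2 * QC ≤ 8 * Qw := dirichlet_comparison hw0 hw1 hexp hγ.le u
  set Spp : ℝ := ∑ y, ∑ z, (π y * P y z) * (u y - u z)^2 with hSpp
  have hSppD : Spp ≤ 2*D := by
    have hpt : ∀ y z, (π y * P y z)*(u y - u z)^2 ≤ 2*((π y * M y z)*(u y - u z)^2) := by
      intro y z
      nlinarith [mul_nonneg (mul_nonneg (hπ0 y)
        (sub_nonneg.2 (hMge y z))) (sq_nonneg (u y - u z))]
    calc Spp ≤ ∑ y, ∑ z, 2*((π y * M y z)*(u y - u z)^2) :=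
          Finset.sum_le_sum fun y _ => Finset.sum_le_sum fun z _ => hpt y z
      _ = 2*D := by
          rw [hD, Finset.mul_sum]
          exact Finset.sum_congr rfl fun y _ => by rw [Finset.mul_sum]
  have hSppQw : 2*W*Spp = Qw := by
    rw [hSpp, hQw, Finset.mul_sum]
    refine Finset.sum_congr rfl fun y _ => ?_
    rw [Finset.mul_sum]
    refine Finset.sum_congr rfl fun z _ => ?_
    rcases eq_or_ne y z with rfl | hyz
    · simp
    · have e : π y * P y z = w y z / (2*W) := by
        rw [hπ, hP, statDist, lazyStep, if_neg hyz, zero_add, ← hW]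
        have h1 := (hd y).ne'
        have h2 := hW0.ne'
        field_simp
      rw [e]
      have h2 := hW0.ne'
      field_simp
  have hππ : ∑ y, ∑ z, (π y * π z) * (u y - u z)^2 = 2*Su := by
    have hq := quad_identity π (fun _ z => π z) u (fun y => statDist_sum hW0.ne')
      (fun z => by rw [← Finset.sum_mul, statDist_sum hW0.ne', one_mul])
    have hcross : ∑ y, ∑ z, (π y * π z) * (u y * u z) = 0 := by
      have e : ∀ y : V, ∑ z, (π y * π z)*(u y * u z) = (π y * u y) * ∑ z, π z * u z := by
        intro y
        rw [Finset.mul_sum]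
        exact Finset.sum_congr rfl fun z _ => by ring
      rw [Finset.sum_congr rfl fun y _ => e y]
      rw [show ∑ z, π z * u z = 0 from hu]
      simp
    rw [hq, hcross]
    ring
  have hQClow : W^2 * (2*Su) ≤ n^2 * QC := by
    rw [← hππ]
    calc W^2 * ∑ y, ∑ z, (π y * π z) * (u y - u z)^2
        = ∑ y, ∑ z, W^2 * ((π y * π z) * (u y - u z)^2) := by
          rw [Finset.mul_sum]
          exact Finset.sum_congr rfl fun y _ => by rw [Finset.mul_sum]
      _ ≤ ∑ y, ∑ z, n^2 * (u y - u z)^2 := by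
          refine Finset.sum_le_sum fun y _ => Finset.sum_le_sum fun z _ => ?_
          have h1 : (W*π y)*(W*π z) ≤ n*n :=
            mul_le_mul (hπle y) (hπle z) (mul_nonneg hW0.le (hπ0 z)) (by linarith)
          have h2 : W^2 * ((π y * π z) * (u y - u z)^2)
              = ((W*π y)*(W*π z)) * (u y - u z)^2 := by ring
          rw [h2]
          have := mul_le_mul_of_nonneg_right h1 (sq_nonneg (u y - u z))
          nlinarith [this]
      _ = n^2 * QC := by
          rw [hQC, Finset.mul_sum]
          exact Finset.sum_congr rfl fun y _ => by rw [Finset.mul_sum]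
  have hgoal32 : γ^3 * Su ≤ 32 * D := by
    have c1 : γ^2 * (W^2*(2*Su)) ≤ γ^2 * (n^2*QC) :=
      mul_le_mul_of_nonneg_left hQClow (sq_nonneg γ)
    have c2 : n^2 * (γ^2*QC) ≤ n^2 * (8*Qw) := mul_le_mul_of_nonneg_left hcomp (sq_nonneg n)
    have c3 : Qw ≤ 4*W*D := by
      have h := mul_le_mul_of_nonneg_left hSppD (by linarith : (0:ℝ) ≤ 2*W)
      linarith [h, hSppQw]
    have c5 : 8*(n^2)*Qw ≤ 32*(n^2)*W*D := by
      linarith [mul_le_mul_of_nonneg_left c3 (by positivity : (0:ℝ) ≤ 8*n^2)]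
    have c6 : 2*γ^2*W*Su ≤ 32*(n^2)*D := by
      have h := le_of_mul_le_mul_left
        (show W*(2*γ^2*W*Su) ≤ W*(32*(n^2)*D) by linarith [c1, c2, c5]) hW0
      exact h
    have c7 : γ*n^2*(γ^2*Su) ≤ 2*W*(γ^2*Su) :=
      mul_le_mul_of_nonneg_right hWn (mul_nonneg (sq_nonneg γ) hSu0)
    have c8 : n^2*(γ^3*Su) ≤ n^2*(32*D) := by linarith [c6, c7]
    exact le_of_mul_le_mul_left c8 (by positivity)
  rw [hLHS]
  linarith [hgoal32, hD2]

lemma pow_col {w : V → V → ℝ} (hsymm : ∀ x y, w x y = w y x) (hd : ∀ v, 0 < wdeg w v)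
    (t : ℕ) (y : V) : ∑ x, statDist w x * (lazyStep w ^ t) x y = statDist w y := by
  calc ∑ x, statDist w x * (lazyStep w ^ t) x y
      = ∑ x, statDist w y * (lazyStep w ^ t) y x :=
        Finset.sum_congr rfl fun x _ => pow_rev hsymm hd t x y
    _ = statDist w y * ∑ x, (lazyStep w ^ t) y x := by rw [Finset.mul_sum]
    _ = statDist w y := by rw [pow_rowsum hd, mul_one]

lemma iterate_bound {w : V → V → ℝ} {γ : ℝ} (hsymm : ∀ x y, w x y = w y x)
    (hw0 : ∀ x y, 0 ≤ w x y) (hw1 : ∀ x y, w x y ≤ 1) (hloop : ∀ x, w x x = 0)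
    (hexp : IsExpander w γ) (hγ : 0 < γ) (hγ1 : γ ≤ 1) (hn2 : 2 ≤ Fintype.card V)
    (u : V → ℝ) (hu : ∑ x, statDist w x * u x = 0) (t : ℕ) :
    ∑ x, statDist w x * (∑ y, (lazyStep w ^ t) x y * u y)^2
      ≤ (1 - γ^3/64)^t * ∑ x, statDist w x * u x^2 := by
  have hNe : Nonempty V := Fintype.card_pos_iff.1 (by omega)
  have hn1 : (1:ℝ) ≤ (Fintype.card V : ℝ) - 1 := by
    have : (2:ℝ) ≤ (Fintype.card V : ℝ) := by exact_mod_cast hn2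
    linarith
  have hd : ∀ v, 0 < wdeg w v := fun v =>
    lt_of_lt_of_le (mul_pos hγ (by linarith)) (wdeg_ge hexp hloop v)
  have hg3 : γ^3 ≤ 1 := pow_le_one₀ hγ.le hγ1
  have hβ : (0:ℝ) ≤ 1 - γ^3/64 := by linarith
  induction t with
  | zero =>
      simp only [pow_zero, Matrix.one_apply, one_mul]
      have e : ∀ x : V, ∑ y, (if x = y then (1:ℝ) else 0) * u y = u x := by
        intro x
        rw [Finset.sum_congr rfl fun y _ => (ite_mul _ _ _ _)]
        simp
      exact le_of_eq (Finset.sum_congr rfl fun x _ => by rw [e x])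
  | succ t ih =>
      set v : V → ℝ := fun x => ∑ y, (lazyStep w ^ t) x y * u y with hv
      have hvmean : ∑ x, statDist w x * v x = 0 := by
        calc ∑ x, statDist w x * v x
            = ∑ x, ∑ y, (statDist w x * (lazyStep w ^ t) x y) * u y := by
              refine Finset.sum_congr rfl fun x _ => ?_
              rw [hv]
              simp only []
              rw [Finset.mul_sum]
              exact Finset.sum_congr rfl fun y _ => by ring
          _ = ∑ y, (∑ x, statDist w x * (lazyStep w ^ t) x y) * u y := by
              rw [Finset.sum_comm]
              exact Finset.sum_congr rfl fun y _ => by rw [Finset.sum_mul]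
          _ = ∑ y, statDist w y * u y := Finset.sum_congr rfl fun y _ => by
              rw [pow_col hsymm hd t y]
          _ = 0 := hu
      have hstep : ∀ x, (∑ y, (lazyStep w ^ (t+1)) x y * u y)
          = ∑ z, lazyStep w x z * v z := by
        intro x
        rw [pow_succ']
        simp only [Matrix.mul_apply]
        calc ∑ y, (∑ z, lazyStep w x z * (lazyStep w ^ t) z y) * u y
            = ∑ y, ∑ z, lazyStep w x z * ((lazyStep w ^ t) z y * u y) := by
              refine Finset.sum_congr rfl fun y _ => ?_
              rw [Finset.sum_mul]
              exact Finset.sum_congr rfl fun z _ => by ring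
          _ = ∑ z, ∑ y, lazyStep w x z * ((lazyStep w ^ t) z y * u y) := Finset.sum_comm
          _ = ∑ z, lazyStep w x z * v z := by
              refine Finset.sum_congr rfl fun z _ => ?_
              rw [hv]
              simp only []
              rw [Finset.mul_sum]
      calc ∑ x, statDist w x * (∑ y, (lazyStep w ^ (t+1)) x y * u y)^2
          = ∑ x, statDist w x * (∑ z, lazyStep w x z * v z)^2 :=
            Finset.sum_congr rfl fun x _ => by rw [hstep x]
        _ ≤ (1 - γ^3/64) * ∑ x, statDist w x * v x^2 :=
            contraction hsymm hw0 hw1 hloop hexp hγ hn2 v hvmean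
        _ ≤ (1 - γ^3/64) * ((1 - γ^3/64)^t * ∑ x, statDist w x * u x^2) :=
            mul_le_mul_of_nonneg_left ih hβ
        _ = (1 - γ^3/64)^(t+1) * ∑ x, statDist w x * u x^2 := by ring

lemma entry_bound {w : V → V → ℝ} {γ : ℝ} (hsymm : ∀ x y, w x y = w y x)
    (hw0 : ∀ x y, 0 ≤ w x y) (hw1 : ∀ x y, w x y ≤ 1) (hloop : ∀ x, w x x = 0)
    (hexp : IsExpander w γ) (hγ : 0 < γ) (hγ1 : γ ≤ 1) (hn2 : 2 ≤ Fintype.card V)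
    (t : ℕ) (x y : V) :
    |(lazyStep w ^ t) x y - statDist w y| ≤ Real.sqrt ((1/γ) * (1-γ^3/64)^t) := by
  classical
  have hNe : Nonempty V := Fintype.card_pos_iff.1 (by omega)
  have hn1 : (1:ℝ) ≤ (Fintype.card V : ℝ) - 1 := by
    have : (2:ℝ) ≤ (Fintype.card V : ℝ) := by exact_mod_cast hn2
    linarith
  have hd : ∀ v, 0 < wdeg w v := fun v =>
    lt_of_lt_of_le (mul_pos hγ (by linarith)) (wdeg_ge hexp hloop v)
  set W : ℝ := ∑ v, wdeg w v with hW
  have hW0 : 0 < W := Finset.sum_pos (fun v _ => hd v) Finset.univ_nonempty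
  set π : V → ℝ := statDist w with hπ
  have hπpos : ∀ v, 0 < π v := fun v => div_pos (hd v) hW0
  have hg3 : γ^3 ≤ 1 := pow_le_one₀ hγ.le hγ1
  have hβ : (0:ℝ) ≤ 1 - γ^3/64 := by linarith
  have hβt : (0:ℝ) ≤ (1 - γ^3/64)^t := pow_nonneg hβ t
  -- the test function
  set u : V → ℝ := fun z => (if z = y then 1/π y else 0) - 1 with hu_def
  have hu : ∑ z, π z * u z = 0 := by
    have e : ∀ z, π z * u z = (if z = y then 1 else 0) - π z := by
      intro z
      simp only [hu_def]
      by_cases hz : z = y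
      · subst hz
        rw [if_pos rfl, if_pos rfl, mul_sub, mul_one, mul_one_div, div_self (hπpos z).ne']
      · simp [hz]
    rw [Finset.sum_congr rfl fun z _ => e z, Finset.sum_sub_distrib]
    rw [statDist_sum hW0.ne']
    simp
  have hnorm : ∑ z, π z * u z^2 ≤ 1/π y := by
    have e : ∀ z, π z * u z^2 = π z + (if z = y then π y*(1/π y - 1)^2 - π y else 0) := by
      intro z
      simp only [hu_def]
      by_cases hz : z = y
      · subst hz
        rw [if_pos rfl, if_pos rfl]
        ring
      · rw [if_neg hz, if_neg hz]
        ring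
    rw [Finset.sum_congr rfl fun z _ => e z, Finset.sum_add_distrib, statDist_sum hW0.ne']
    rw [Finset.sum_ite_eq' Finset.univ y (fun _ => π y*(1/π y - 1)^2 - π y)]
    simp only [Finset.mem_univ, if_true]
    have hy := hπpos y
    have e2 : π y*(1/π y - 1)^2 = 1/π y - 2 + π y := by
      field_simp
      ring
    rw [e2]
    linarith
  have hvt : ∀ s : ℕ, ∀ q : V, ∑ z, (lazyStep w ^ s) q z * u z
      = (lazyStep w ^ s) q y * (1/π y) - 1 := by
    intro s q
    have e : ∀ z, (lazyStep w ^ s) q z * u z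
        = (if z = y then (lazyStep w ^ s) q z * (1/π y) else 0) - (lazyStep w ^ s) q z := by
      intro z
      simp only [hu_def]
      by_cases hz : z = y
      · rw [if_pos hz, if_pos hz]
        ring
      · rw [if_neg hz, if_neg hz]
        ring
    rw [Finset.sum_congr rfl fun z _ => e z, Finset.sum_sub_distrib,
      Finset.sum_ite_eq' Finset.univ y (fun z => (lazyStep w ^ s) q z * (1/π y)),
      pow_rowsum hd]
    simp
  have hiter := iterate_bound hsymm hw0 hw1 hloop hexp hγ hγ1 hn2 u hu t
  -- single term bound
  have hone : π x * (∑ z, (lazyStep w ^ t) x z * u z)^2 ≤ (1-γ^3/64)^t * (1/π y) := by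
    calc π x * (∑ z, (lazyStep w ^ t) x z * u z)^2
        ≤ ∑ q, π q * (∑ z, (lazyStep w ^ t) q z * u z)^2 :=
          Finset.single_le_sum (f := fun q => π q * (∑ z, (lazyStep w ^ t) q z * u z)^2)
            (fun q _ => mul_nonneg (hπpos q).le (sq_nonneg _)) (Finset.mem_univ x)
      _ ≤ (1-γ^3/64)^t * ∑ z, π z * u z^2 := hiter
      _ ≤ (1-γ^3/64)^t * (1/π y) := mul_le_mul_of_nonneg_left hnorm hβt
  rw [hvt t x] at hone
  -- convert
  have hyx : γ * π y ≤ π x := by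
    have h1 : wdeg w y ≤ (Fintype.card V : ℝ) - 1 := wdeg_le w hw1 hloop y
    have h2 : γ * ((Fintype.card V : ℝ) - 1) ≤ wdeg w x := wdeg_ge hexp hloop x
    have h3 : γ * wdeg w y ≤ wdeg w x :=
      le_trans (mul_le_mul_of_nonneg_left h1 hγ.le) h2
    rw [hπ]
    unfold statDist
    rw [← hW, ← mul_div_assoc]
    exact (div_le_div_iff_of_pos_right hW0).2 h3
  have hkey : γ * ((lazyStep w ^ t) x y - π y)^2 ≤ (1-γ^3/64)^t := by
    have e : (lazyStep w ^ t) x y - π y = π y * ((lazyStep w ^ t) x y * (1/π y) - 1) := by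
      field_simp [(hπpos y).ne']
    rw [e]
    have h0 : (0:ℝ) ≤ π y * ((lazyStep w ^ t) x y * (1/π y) - 1)^2 :=
      mul_nonneg (hπpos y).le (sq_nonneg _)
    calc γ * (π y * ((lazyStep w ^ t) x y * (1/π y) - 1))^2
        = (γ * π y) * (π y * ((lazyStep w ^ t) x y * (1/π y) - 1)^2) := by ring
      _ ≤ π x * (π y * ((lazyStep w ^ t) x y * (1/π y) - 1)^2) :=
          mul_le_mul_of_nonneg_right hyx h0
      _ = π y * (π x * ((lazyStep w ^ t) x y * (1/π y) - 1)^2) := by ring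
      _ ≤ π y * ((1-γ^3/64)^t * (1/π y)) := mul_le_mul_of_nonneg_left hone (hπpos y).le
      _ = (1-γ^3/64)^t := by
          field_simp [(hπpos y).ne']
  have hfin : ((lazyStep w ^ t) x y - π y)^2 ≤ (1/γ) * (1-γ^3/64)^t := by
    have h := mul_le_mul_of_nonneg_left hkey (by positivity : (0:ℝ) ≤ 1/γ)
    have e : (1/γ) * (γ * ((lazyStep w ^ t) x y - π y)^2)
        = ((lazyStep w ^ t) x y - π y)^2 := by field_simp
    linarith [h, e]
  calc |(lazyStep w ^ t) x y - π y|
      = Real.sqrt (((lazyStep w ^ t) x y - π y)^2) := by rw [Real.sqrt_sq_eq_abs]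
    _ ≤ Real.sqrt ((1/γ) * (1-γ^3/64)^t) := Real.sqrt_le_sqrt hfin

lemma mixing_le {w : V → V → ℝ} {γ : ℝ} (hsymm : ∀ x y, w x y = w y x)
    (hw0 : ∀ x y, 0 ≤ w x y) (hw1 : ∀ x y, w x y ≤ 1) (hloop : ∀ x, w x x = 0)
    (hexp : IsExpander w γ) (hγ : 0 < γ) (hγ1 : γ ≤ 1) (hn2 : 2 ≤ Fintype.card V)
    (T : ℕ) (hT : (1/γ) * (1-γ^3/64)^T ≤ 1/16) : mixingTime w ≤ T := by
  apply Nat.sInf_le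
  simp only [Set.mem_setOf_eq]
  intro x y
  calc |(lazyStep w ^ T) x y - statDist w y| ≤ Real.sqrt ((1/γ) * (1-γ^3/64)^T) :=
        entry_bound hsymm hw0 hw1 hloop hexp hγ hγ1 hn2 T x y
    _ ≤ Real.sqrt (1/16) := Real.sqrt_le_sqrt hT
    _ = 1/4 := by
        rw [show (1/16:ℝ) = (1/4)^2 by norm_num, Real.sqrt_sq (by norm_num : (0:ℝ) ≤ 1/4)]

theorem main_thm (γ : ℝ) (hγ : 0 < γ) :
    ∃ N : ℕ, ∀ n ≥ N, ∀ (V : Type) [Fintype V] [DecidableEq V], Fintype.card V = n →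
      ∀ w : V → V → ℝ, (∀ x y, w x y = w y x) → (∀ x y, w x y ∈ Set.Icc (0:ℝ) 1) →
      (∀ x, w x x = 0) → IsExpander w γ →
        (mixingTime w : ℝ) ≤ 64 / γ ^ 4 * Real.log n := by
  classical
  set T : ℕ := ⌈(64/γ^3) * Real.log (16/γ)⌉₊ with hT_def
  refine ⟨max 2 (⌈Real.exp ((T:ℝ) * γ^4/64)⌉₊ + 1), ?_⟩
  intro n hn V _ _ hcard w hsymm hw01 hloop hexp
  have hw0 : ∀ x y, 0 ≤ w x y := fun x y => (hw01 x y).1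
  have hw1 : ∀ x y, w x y ≤ 1 := fun x y => (hw01 x y).2
  have hn2 : 2 ≤ Fintype.card V := by rw [hcard]; exact le_trans (le_max_left _ _) hn
  have hNe : Nonempty V := Fintype.card_pos_iff.1 (by omega)
  have hn1 : (1:ℝ) ≤ (Fintype.card V : ℝ) - 1 := by
    have : (2:ℝ) ≤ (Fintype.card V : ℝ) := by exact_mod_cast hn2
    linarith
  obtain ⟨v⟩ := hNe
  have hγ1 : γ ≤ 1 := by
    have h1 := wdeg_ge hexp hloop v
    have h2 := wdeg_le w hw1 hloop v
    nlinarith [hn1]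
  have hlog : 0 ≤ Real.log (16/γ) := Real.log_nonneg (by rw [le_div_iff₀ hγ]; linarith)
  have hTle : (64/γ^3) * Real.log (16/γ) ≤ (T:ℝ) := Nat.le_ceil _
  have hβ1 : 1 - γ^3/64 ≤ Real.exp (-(γ^3/64)) := by
    have := Real.add_one_le_exp (-(γ^3/64))
    linarith
  have hg3 : γ^3 ≤ 1 := pow_le_one₀ hγ.le hγ1
  have hβ0 : (0:ℝ) ≤ 1 - γ^3/64 := by linarith
  have hpow : (1-γ^3/64)^T ≤ Real.exp (-(γ^3/64) * T) := by
    calc (1-γ^3/64)^T ≤ (Real.exp (-(γ^3/64)))^T := pow_le_pow_left₀ hβ0 hβ1 T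
      _ = Real.exp (-(γ^3/64) * T) := by
          rw [← Real.exp_nat_mul]
          congr 1
          ring
  have harg : -(γ^3/64) * T ≤ -Real.log (16/γ) := by
    have h2 := mul_le_mul_of_nonneg_left hTle (by positivity : (0:ℝ) ≤ γ^3/64)
    have e : (γ^3/64) * ((64/γ^3) * Real.log (16/γ)) = Real.log (16/γ) := by
      field_simp
    linarith
  have hexp_le : Real.exp (-(γ^3/64) * (T:ℝ)) ≤ γ/16 := by
    calc Real.exp (-(γ^3/64) * T) ≤ Real.exp (-Real.log (16/γ)) := Real.exp_le_exp.2 harg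
      _ = γ/16 := by
          rw [Real.exp_neg, Real.exp_log (by positivity : (0:ℝ) < 16/γ), inv_div]
  have hT16 : (1/γ) * (1-γ^3/64)^T ≤ 1/16 := by
    have h1 : (1-γ^3/64)^T ≤ γ/16 := le_trans hpow hexp_le
    have h2 : (1/γ) * (1-γ^3/64)^T ≤ (1/γ)*(γ/16) :=
      mul_le_mul_of_nonneg_left h1 (by positivity)
    have e : (1/γ)*(γ/16) = 1/16 := by field_simp
    linarith
  have hmix : mixingTime w ≤ T := mixing_le hsymm hw0 hw1 hloop hexp hγ hγ1 hn2 T hT16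
  have hnN : (⌈Real.exp ((T:ℝ) * γ^4/64)⌉₊ + 1) ≤ n := le_trans (le_max_right _ _) hn
  have hexpn : Real.exp ((T:ℝ) * γ^4/64) ≤ (n:ℝ) := by
    calc Real.exp ((T:ℝ) * γ^4/64) ≤ (⌈Real.exp ((T:ℝ) * γ^4/64)⌉₊ : ℝ) := Nat.le_ceil _
      _ ≤ n := by exact_mod_cast Nat.le_of_succ_le hnN
  have hn0 : (0:ℝ) < n := lt_of_lt_of_le (Real.exp_pos _) hexpn
  have hlogn : (T:ℝ) * γ^4/64 ≤ Real.log n := (Real.le_log_iff_exp_le hn0).2 hexpn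
  calc (mixingTime w : ℝ) ≤ (T:ℝ) := by exact_mod_cast hmix
    _ = 64/γ^4 * ((T:ℝ)*γ^4/64) := by
        field_simp
        try ring
    _ ≤ 64/γ^4 * Real.log n := mul_le_mul_of_nonneg_left hlogn (by positivity)

end ExpanderMixingProof

/-- For every `γ > 0` there exists `N` such that for all `n ≥ N`: every
loopless weighted graph on `n` vertices, with edge weights in `[0,1]`, that is a
`γ`-expander has lazy random walk mixing time at most `(64/γ⁴)·log n`. -/
theorem mixingTime_le_of_expander (γ : ℝ) (hγ : 0 < γ) :
    ∃ N : ℕ, ∀ n ≥ N, ∀ (V : Type) [Fintype V] [DecidableEq V], Fintype.card V = n →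
      ∀ w : V → V → ℝ, IsWeightedGraph w → IsExpander w γ →
        (mixingTime w : ℝ) ≤ 64 / γ ^ 4 * Real.log n := by
  obtain ⟨N, hN⟩ := main_thm γ hγ
  exact ⟨N, fun n hn V _ _ hcard w hwg hexp =>
    hN n hn V hcard w hwg.1 (fun x y => hwg.2.1 x y) hwg.2.2 hexp⟩

end
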